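/- arXiv:2106.12010 — 3 statements merged into one kernel-verified Lean document; each statement's English description precedes it below -/
import Mathlib

section
/- Let H be a real inner product space, let a < b ≤ c be real numbers, and let χ_{a,b} be the linear cutoff function associated to [a,b]. Let u : ℝ → H and u' : ℝ → H be functions such that u has derivative u'(t) at every t ∈ [a,c] and u' is continuous on [a,c]. Then ∫_a^c χ_{a,b}(t) ⟪u'(t), u(t)⟫ dt = (1/2)‖u(c)‖² − (1/(2(b−a))) ∫_a^b ‖u(t)‖² dt. (This is the integration-by-parts identity used in Step 1 of Lemma 4.5 of the paper, with a = t_{n−k}, b = t_{n−k+1}, c = t_{n+1}.) -/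
open Classical in
/-- The linear cutoff function `χ_{a,b}` associated to the interval `[a,b]`:
`0` for `t ≤ a`, `(t-a)/(b-a)` for `a ≤ t ≤ b`, and `1` for `t ≥ b`. -/
noncomputable def linearCutoff (a b t : ℝ) : ℝ :=
  if t ≤ a then 0 else if t ≤ b then (t - a) / (b - a) else 1

/-- integration-by-parts identity with the linear cutoff `χ_{a,b}`:
`∫_a^c χ_{a,b}(t) ⟪u'(t), u(t)⟫ dt = (1/2)‖u(c)‖² − (1/(2(b−a))) ∫_a^b ‖u(t)‖² dt`. -/
theorem stmt1 {H : Type*} [NormedAddCommGroup H] [InnerProductSpace ℝ H]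
    {a b c : ℝ} (hab : a < b) (hbc : b ≤ c) (u u' : ℝ → H)
    (hderiv : ∀ t ∈ Set.Icc a c, HasDerivAt u (u' t) t)
    (hcont : ContinuousOn u' (Set.Icc a c)) :
    (∫ t in a..c, linearCutoff a b t * (inner ℝ (u' t) (u t) : ℝ)) =
      (1 / 2) * ‖u c‖ ^ 2 - (1 / (2 * (b - a))) * ∫ t in a..b, ‖u t‖ ^ 2 := by
  have hac : a ≤ c := hab.le.trans hbc
  have hba : (0:ℝ) < b - a := by linarith
  set f : ℝ → ℝ := fun t => (1/2) * ‖u t‖^2 with hf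
  set g : ℝ → ℝ := fun t => (inner ℝ (u' t) (u t) : ℝ) with hg
  -- derivative of f
  have hfderiv : ∀ t ∈ Set.Icc a c, HasDerivAt f (g t) t := by
    intro t ht
    have h1 : HasDerivAt (fun s => (inner ℝ (u s) (u s) : ℝ))
        ((inner ℝ (u t) (u' t) : ℝ) + (inner ℝ (u' t) (u t) : ℝ)) t :=
      (hderiv t ht).inner ℝ (hderiv t ht)
    have h2 : HasDerivAt (fun s => (1/2 : ℝ) * (inner ℝ (u s) (u s) : ℝ))
        ((1/2 : ℝ) * ((inner ℝ (u t) (u' t) : ℝ) + (inner ℝ (u' t) (u t) : ℝ))) t :=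
      h1.const_mul _
    have heq : (fun s => (1/2 : ℝ) * (inner ℝ (u s) (u s) : ℝ)) = f := by
      funext s; simp [hf, real_inner_self_eq_norm_sq]
    rw [heq] at h2
    have hgt : g t = (1/2 : ℝ) * ((inner ℝ (u t) (u' t) : ℝ) + (inner ℝ (u' t) (u t) : ℝ)) := by
      rw [hg]; simp only; rw [real_inner_comm (u t) (u' t)]; ring
    rw [hgt]; exact h2
  -- continuity of u on Icc
  have hucont : ContinuousOn u (Set.Icc a c) := fun t ht =>
    (hderiv t ht).continuousAt.continuousWithinAt
  have hgcont : ContinuousOn g (Set.Icc a c) := by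
    exact hcont.inner hucont
  have hgint : ∀ {x y : ℝ}, a ≤ x → x ≤ y → y ≤ c →
      IntervalIntegrable g MeasureTheory.volume x y := by
    intro x y hx hxy hy
    apply ContinuousOn.intervalIntegrable
    apply hgcont.mono
    rw [Set.uIcc_of_le hxy]
    exact Set.Icc_subset_Icc hx hy
  have hfcont : ContinuousOn f (Set.Icc a c) := by
    exact ((hucont.norm.pow 2).const_smul (1/2 : ℝ) : _)
  -- pointwise descriptions of the cutoff
  have heqon1 : Set.EqOn (fun t => ((t - a) / (b - a)) * g t)
      (fun t => linearCutoff a b t * g t) (Set.uIcc a b) := by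
    intro t ht
    rw [Set.uIcc_of_le hab.le] at ht
    by_cases h : t ≤ a
    · have : t = a := le_antisymm h ht.1
      subst this; simp [linearCutoff]
    · simp [linearCutoff, h, ht.2]
  have heqon2 : Set.EqOn g (fun t => linearCutoff a b t * g t) (Set.uIcc b c) := by
    intro t ht
    rw [Set.uIcc_of_le hbc] at ht
    have h1 : ¬ t ≤ a := by push_neg; linarith [ht.1]
    by_cases h2 : t ≤ b
    · have htb : t = b := le_antisymm h2 ht.1
      subst htb
      simp [linearCutoff, h1, div_self hba.ne']
    · simp [linearCutoff, h1, h2]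
  have hχint1 : IntervalIntegrable (fun t => linearCutoff a b t * g t)
      MeasureTheory.volume a b := by
    have hint : IntervalIntegrable (fun t => ((t - a) / (b - a)) * g t)
        MeasureTheory.volume a b := by
      apply ContinuousOn.intervalIntegrable
      apply ContinuousOn.mul
      · fun_prop
      · apply hgcont.mono; rw [Set.uIcc_of_le hab.le]; exact Set.Icc_subset_Icc le_rfl hbc
    rw [intervalIntegrable_iff]
    exact hint.def'.congr_fun (heqon1.mono Set.uIoc_subset_uIcc) measurableSet_uIoc
  have hχint2 : IntervalIntegrable (fun t => linearCutoff a b t * g t)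
      MeasureTheory.volume b c := by
    rw [intervalIntegrable_iff]
    exact (hgint hab.le hbc le_rfl).def'.congr_fun (heqon2.mono Set.uIoc_subset_uIcc)
      measurableSet_uIoc
  rw [← intervalIntegral.integral_add_adjacent_intervals hχint1 hχint2]
  -- second piece
  have hpiece2 : (∫ t in b..c, linearCutoff a b t * g t) = f c - f b := by
    rw [← intervalIntegral.integral_congr heqon2]
    apply intervalIntegral.integral_eq_sub_of_hasDerivAt
    · intro t ht
      rw [Set.uIcc_of_le hbc] at ht
      exact hfderiv t ⟨hab.le.trans ht.1, ht.2⟩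
    · exact hgint hab.le hbc le_rfl
  -- first piece: integration by parts
  have hpiece1 : (∫ t in a..b, linearCutoff a b t * g t)
      = f b - (1/(b-a)) * ∫ t in a..b, f t := by
    rw [← intervalIntegral.integral_congr heqon1]
    have hibp := intervalIntegral.integral_mul_deriv_eq_deriv_mul
      (u := fun t => (t - a) / (b - a)) (u' := fun _ => 1 / (b - a))
      (v := f) (v' := g) (a := a) (b := b)
      (fun x _ => by
        simpa using ((hasDerivAt_id x).sub_const a).div_const (b - a))
      (fun x hx => by
        rw [Set.uIcc_of_le hab.le] at hx
        exact hfderiv x ⟨hx.1, hx.2.trans hbc⟩)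
      intervalIntegrable_const
      (hgint le_rfl hab.le hbc)
    rw [hibp]
    have h1 : ((b:ℝ) - a) / (b - a) = 1 := div_self hba.ne'
    have h2 : ((a:ℝ) - a) / (b - a) = 0 := by rw [sub_self, zero_div]
    simp only [h1, h2, one_mul, zero_mul, sub_zero]
    rw [intervalIntegral.integral_const_mul]
  rw [hpiece1, hpiece2]
  have : (∫ t in a..b, f t) = (1/2) * ∫ t in a..b, ‖u t‖^2 := by
    rw [← intervalIntegral.integral_const_mul]
  rw [this]
  field_simp
  ring
end

section
/- Let H be a real inner product space, let a < b be real numbers, and let u : ℝ → H and u' : ℝ → H be functions such that u has derivative u'(t) at every t ∈ [a,b] and u' is continuous on [a,b]. Then (1/2)‖u(a)‖² ≤ (1/(b−a)) ∫_a^b ‖u(t)‖² dt + ∫_a^b ‖u'(t)‖ ‖u(t)‖ dt. (This is the trace-type estimate established in Step 3 of the proof of Lemma 4.5 of the paper, controlling the value of a function at the left endpoint of a time interval by its L² norm and the product of the L² norms of the function and its time derivative over that interval.) -/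
open MeasureTheory


/-- trace-type estimate
`(1/2)‖u(a)‖² ≤ (1/(b−a)) ∫_a^b ‖u(t)‖² dt + ∫_a^b ‖u'(t)‖ ‖u(t)‖ dt`. -/
theorem stmt3 {H : Type*} [NormedAddCommGroup H] [InnerProductSpace ℝ H]
    {a b : ℝ} (hab : a < b) (u u' : ℝ → H)
    (hderiv : ∀ t ∈ Set.Icc a b, HasDerivAt u (u' t) t)
    (hcont : ContinuousOn u' (Set.Icc a b)) :
    (1 / 2) * ‖u a‖ ^ 2 ≤
      (1 / (b - a)) * (∫ t in a..b, ‖u t‖ ^ 2) + ∫ t in a..b, ‖u' t‖ * ‖u t‖ := by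
  have hba : (0:ℝ) < b - a := sub_pos.mpr hab
  have hu : ContinuousOn u (Set.Icc a b) := fun t ht =>
    (hderiv t ht).continuousAt.continuousWithinAt
  have hprod : ContinuousOn (fun t => ‖u' t‖ * ‖u t‖) (Set.Icc a b) :=
    hcont.norm.mul hu.norm
  have hIint : IntervalIntegrable (fun t => ‖u' t‖ * ‖u t‖) volume a b :=
    (show ContinuousOn _ (Set.uIcc a b) by rw [Set.uIcc_of_le hab.le]; exact hprod).intervalIntegrable
  set I := ∫ t in a..b, ‖u' t‖ * ‖u t‖ with hI
  have hInn : 0 ≤ I := intervalIntegral.integral_nonneg hab.le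
    (fun t ht => mul_nonneg (norm_nonneg _) (norm_nonneg _))
  have hJnn : 0 ≤ ∫ t in a..b, ‖u t‖ ^ 2 := intervalIntegral.integral_nonneg hab.le
    (fun t ht => sq_nonneg _)
  have key : ∀ s ∈ Set.Icc a b, ‖u a‖ ^ 2 ≤ ‖u s‖ ^ 2 + 2 * I := by
    intro s hs
    have hsub : Set.Icc a s ⊆ Set.Icc a b := Set.Icc_subset_Icc le_rfl hs.2
    have hderiv2 : ∀ t ∈ Set.uIcc a s,
        HasDerivAt (fun t => ‖u t‖ ^ 2)
          (2 * (inner ℝ (u' t) (u t) : ℝ)) t := by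
      intro t ht
      rw [Set.uIcc_of_le hs.1] at ht
      have h := hderiv t (hsub ht)
      have h2 : HasDerivAt (fun t => (inner ℝ (u t) (u t) : ℝ))
          ((inner ℝ (u t) (u' t) : ℝ) + (inner ℝ (u' t) (u t) : ℝ)) t := h.inner ℝ h
      have : HasDerivAt (fun t => (inner ℝ (u t) (u t) : ℝ))
          (2 * (inner ℝ (u' t) (u t) : ℝ)) t := by
        convert h2 using 1
        rw [real_inner_comm (u t) (u' t)]; ring
      simpa only [real_inner_self_eq_norm_sq] using this
    have hgc : ContinuousOn (fun t => 2 * (inner ℝ (u' t) (u t) : ℝ)) (Set.Icc a s) :=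
      (continuousOn_const.mul ((hcont.mono hsub).inner (hu.mono hsub)))
    have hgint : IntervalIntegrable (fun t => 2 * (inner ℝ (u' t) (u t) : ℝ)) volume a s :=
      (show ContinuousOn _ (Set.uIcc a s) by rw [Set.uIcc_of_le hs.1]; exact hgc).intervalIntegrable
    have ftc := intervalIntegral.integral_eq_sub_of_hasDerivAt hderiv2 hgint
    have hb1 : (∫ t in a..s, ‖u' t‖ * ‖u t‖) ≤ I := by
      refine intervalIntegral.integral_mono_interval le_rfl hs.1 hs.2 ?_ hIint
      exact Filter.Eventually.of_forall fun t => by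
        simpa using mul_nonneg (norm_nonneg (u' t)) (norm_nonneg (u t))
    have hb2 : -(∫ t in a..s, 2 * (inner ℝ (u' t) (u t) : ℝ)) ≤
        2 * ∫ t in a..s, ‖u' t‖ * ‖u t‖ := by
      rw [← intervalIntegral.integral_neg, ← intervalIntegral.integral_const_mul]
      refine intervalIntegral.integral_mono_on hs.1 hgint.neg
        (((show ContinuousOn _ (Set.uIcc a s) by rw [Set.uIcc_of_le hs.1]; exact hprod.mono hsub).intervalIntegrable).const_mul 2) ?_
      intro t ht
      have := abs_real_inner_le_norm (u' t) (u t)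
      have h3 := neg_le_of_abs_le this
      nlinarith [abs_nonneg (inner ℝ (u' t) (u t) : ℝ)]
    nlinarith [ftc]
  have hmono := intervalIntegral.integral_mono_on hab.le
    (_root_.intervalIntegrable_const (μ := volume) (c := ‖u a‖ ^ 2))
    ((show ContinuousOn _ (Set.uIcc a b) by rw [Set.uIcc_of_le hab.le]; exact (hu.norm.pow 2).add continuousOn_const).intervalIntegrable)
    key
  rw [intervalIntegral.integral_const, intervalIntegral.integral_add
    ((show ContinuousOn _ (Set.uIcc a b) by rw [Set.uIcc_of_le hab.le]; exact hu.norm.pow 2).intervalIntegrable)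
    (_root_.intervalIntegrable_const), intervalIntegral.integral_const, smul_eq_mul, smul_eq_mul] at hmono
  set J := ∫ t in a..b, ‖u t‖ ^ 2 with hJ
  have h2 : ‖u a‖ ^ 2 ≤ (1 / (b - a)) * J + 2 * I := by
    have h3 := mul_le_mul_of_nonneg_left hmono (le_of_lt (one_div_pos.mpr hba))
    calc ‖u a‖ ^ 2 = (1 / (b - a)) * ((b - a) * ‖u a‖ ^ 2) := by field_simp
      _ ≤ (1 / (b - a)) * (J + (b - a) * (2 * I)) := h3
      _ = (1 / (b - a)) * J + 2 * I := by field_simp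
  have h4 : 0 ≤ (1 / (b - a)) * J := mul_nonneg (le_of_lt (one_div_pos.mpr hba)) hJnn
  linarith
end

section
/- Let X be a real vector space equipped with bilinear forms a, e, s, b : X × X → ℝ such that: a, e and s are positive semidefinite symmetric bilinear forms; b satisfies b(w,w) ≥ 0 for all w ∈ X. Write q_s(x) := s(x,x)^{1/2}, q_e(x) := e(x,x)^{1/2}, and define the energy seminorm ‖v‖_V := (a(v,v) + e(v,v))^{1/2}. Let π : X → X be a linear map that is s-orthogonal, i.e. s(x − π(x), π(y)) = 0 for all x, y ∈ X, and suppose there is a constant C ≥ 0 with q_s(x − π(x)) ≤ C ‖x‖_V for all x ∈ X. Suppose u, u_glo, f̃ ∈ X satisfy: b(u,v) + a(u,v) = s(f̃, v) for all v ∈ X, and b(u_glo, v) + a(u_glo, v) + e(u_glo, v) = s(π(f̃), v) for all v ∈ X. Then ‖u − u_glo‖_V ≤ C q_s(f̃) + q_e(u). (This is the abstract form of Theorem 4.3 of the paper, the error bound ‖u − u_glo‖_V ≤ C₀(1 + (Δt/H²)^{1/2}) ‖κ̃^{−1/2} f‖_{L²} + ‖κ̃^{−1/2} ∂_t u‖_{L²}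 for the global space-time NLMC solution, where s is the κ̃-weighted L² inner product, π the s-orthogonal projection onto the auxiliary space, f̃ = f/κ̃, and C the projection approximation constant.) -/
/-- Cauchy–Schwarz (squared form) for positive semidefinite symmetric bilinear forms. -/
lemma cs_sq_aux {X : Type*} [AddCommGroup X] [Module ℝ X]
    (s : LinearMap.BilinForm ℝ X) (hsymm : ∀ x y, s x y = s y x)
    (hpos : ∀ x, 0 ≤ s x x) (x y : X) :
    (s x y)^2 ≤ s x x * s y y := by
  rcases eq_or_lt_of_le (hpos y) with h0 | h0
  · -- s y y = 0 : show s x y = 0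
    have hxy : s x y = 0 := by
      by_contra hne
      set t : ℝ := -(s x x + 1)/(2 * s x y) with ht
      have hexp : s (x + t • y) (x + t • y)
          = s x x + 2*t*(s x y) + t^2 * (s y y) := by
        simp only [map_add, map_smul, LinearMap.add_apply, LinearMap.smul_apply,
          smul_eq_mul, hsymm y x]
        ring
      have h1 := hpos (x + t • y)
      rw [hexp, ← h0] at h1
      have h2 : t * s x y = -(s x x + 1)/2 := by
        rw [ht]; field_simp
      nlinarith
    rw [hxy, ← h0]; simp
  · have h1 := hpos (s y y • x - s x y • y)
    have hexp : s (s y y • x - s x y • y) (s y y • x - s x y • y)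
        = s y y * (s x x * s y y - (s x y)^2) := by
      simp only [map_sub, map_smul, LinearMap.sub_apply, LinearMap.smul_apply,
        smul_eq_mul, hsymm y x]
      ring
    rw [hexp] at h1
    nlinarith

lemma cs_aux {X : Type*} [AddCommGroup X] [Module ℝ X]
    (s : LinearMap.BilinForm ℝ X) (hsymm : ∀ x y, s x y = s y x)
    (hpos : ∀ x, 0 ≤ s x x) (x y : X) :
    s x y ≤ Real.sqrt (s x x) * Real.sqrt (s y y) := by
  have h := cs_sq_aux s hsymm hpos x y
  have h1 : s x y ≤ |s x y| := le_abs_self _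
  have h2 : |s x y| = Real.sqrt ((s x y)^2) := (Real.sqrt_sq_eq_abs _).symm
  calc s x y ≤ Real.sqrt ((s x y)^2) := by rw [← h2]; exact h1
    _ ≤ Real.sqrt (s x x * s y y) := Real.sqrt_le_sqrt h
    _ = Real.sqrt (s x x) * Real.sqrt (s y y) := Real.sqrt_mul (hpos x) _

/-- abstract form of Theorem 4.3 (global NLMC error bound). -/
theorem stmt6 {X : Type*} [AddCommGroup X] [Module ℝ X]
    (a e s b : LinearMap.BilinForm ℝ X)
    (ha_symm : ∀ x y, a x y = a y x) (ha_pos : ∀ x, 0 ≤ a x x)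
    (he_symm : ∀ x y, e x y = e y x) (he_pos : ∀ x, 0 ≤ e x x)
    (hs_symm : ∀ x y, s x y = s y x) (hs_pos : ∀ x, 0 ≤ s x x)
    (hb_pos : ∀ w, 0 ≤ b w w)
    (π : X →ₗ[ℝ] X)
    (hπ : ∀ x y, s (x - π x) (π y) = 0)
    (C : ℝ) (hC : 0 ≤ C)
    (happrox : ∀ x, Real.sqrt (s (x - π x) (x - π x)) ≤ C * Real.sqrt (a x x + e x x))
    (u uglo ftil : X)
    (hu : ∀ v, b u v + a u v = s ftil v)
    (huglo : ∀ v, b uglo v + a uglo v + e uglo v = s (π ftil) v) :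
    Real.sqrt (a (u - uglo) (u - uglo) + e (u - uglo) (u - uglo)) ≤
      C * Real.sqrt (s ftil ftil) + Real.sqrt (e u u) := by
  set w := u - uglo with hw
  set d := ftil - π ftil with hd
  set N := Real.sqrt (a w w + e w w) with hN
  set K := C * Real.sqrt (s ftil ftil) + Real.sqrt (e u u) with hK
  have hNnn : 0 ≤ N := Real.sqrt_nonneg _
  have hNsq : N * N = a w w + e w w := by
    rw [hN]; exact Real.mul_self_sqrt (add_nonneg (ha_pos w) (he_pos w))
  -- key identity
  have key : b w w + (a w w + e w w) = s d w + e u w := by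
    have h1 := hu w
    have h2 := huglo w
    have hbw : b w w = b u w - b uglo w := by rw [hw]; simp [map_sub]; ring
    have haw : a w w = a u w - a uglo w := by rw [hw]; simp [map_sub]; ring
    have hew : e w w = e u w - e uglo w := by rw [hw]; simp [map_sub]; ring
    have hsd : s d w = s ftil w - s (π ftil) w := by rw [hd]; simp [map_sub]
    rw [hbw, haw, hew, hsd]; linarith
  have step1 : a w w + e w w ≤ s d w + e u w := by
    have := hb_pos w; linarith
  -- s d w = s d (w - π w)
  have horth : s d w = s d (w - π w) := by
    have h0 : s d (π w) = 0 := hπ ftil w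
    have : s d (w - π w) = s d w - s d (π w) := by simp [map_sub]
    rw [this, h0]; ring
  -- sqrt (s d d) ≤ sqrt (s ftil ftil)
  have hpyth : s d d ≤ s ftil ftil := by
    have h0 : s d (π ftil) = 0 := hπ ftil ftil
    have e1 : s d d = s ftil ftil - s ftil (π ftil) - s (π ftil) ftil
        + s (π ftil) (π ftil) := by
      rw [hd]; simp [map_sub]; ring
    have e2 : s ftil (π ftil) - s (π ftil) (π ftil) = 0 := by
      have h0' : s d (π ftil) = s ftil (π ftil) - s (π ftil) (π ftil) := by
        rw [hd]; simp [map_sub]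
      linarith [h0, h0'.symm.trans h0]
    have e3 : s (π ftil) ftil = s ftil (π ftil) := hs_symm _ _
    have := hs_pos (π ftil)
    linarith
  have hdle : Real.sqrt (s d d) ≤ Real.sqrt (s ftil ftil) := Real.sqrt_le_sqrt hpyth
  -- bound s d w
  have hsdw : s d w ≤ Real.sqrt (s ftil ftil) * (C * N) := by
    rw [horth]
    calc s d (w - π w) ≤ Real.sqrt (s d d) * Real.sqrt (s (w - π w) (w - π w)) :=
          cs_aux s hs_symm hs_pos _ _
      _ ≤ Real.sqrt (s ftil ftil) * (C * N) := by
          apply mul_le_mul hdle (happrox w) (Real.sqrt_nonneg _)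
            (Real.sqrt_nonneg _)
  -- bound e u w
  have heuw : e u w ≤ Real.sqrt (e u u) * N := by
    calc e u w ≤ Real.sqrt (e u u) * Real.sqrt (e w w) := cs_aux e he_symm he_pos _ _
      _ ≤ Real.sqrt (e u u) * N := by
          apply mul_le_mul_of_nonneg_left _ (Real.sqrt_nonneg _)
          apply Real.sqrt_le_sqrt; have := ha_pos w; linarith
  have main : N * N ≤ K * N := by
    rw [hNsq, hK]
    calc a w w + e w w ≤ s d w + e u w := step1
      _ ≤ Real.sqrt (s ftil ftil) * (C * N) + Real.sqrt (e u u) * N := by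
          linarith
      _ = (C * Real.sqrt (s ftil ftil) + Real.sqrt (e u u)) * N := by ring
  have hKnn : 0 ≤ K := by positivity
  rcases eq_or_lt_of_le hNnn with h0 | h0
  · rw [← h0]; exact hKnn
  · exact le_of_mul_le_mul_right (by linarith [main]) h0
end
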